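/- Let U be a finite nonempty set, 𝒮 a finite family of subsets of U with ⋃𝒮 = U, and k ∈ ℕ. Construct the network G with vertex set {t_u : u ∈ U} ∪ {s_A : A ∈ 𝒮} ∪ {r}, with a directed edge (t_u, s_A) for every u ∈ A ∈ 𝒮 and a directed edge (s_A, r) for every A ∈ 𝒮, all edge capacities equal to |U|+1 and all edge costs equal to 1, and the request with root r, terminals T = {t_u : u ∈ U}, Steiner sites S = {s_A : A ∈ 𝒮}, root capacity u_r = k, Steiner capacities u_S(s_A) = |U|, and arbitrary positive activation costs. Then this A-CVSAP instance admits a feasible Virtual Arborescence if and only if there exists a subfamily 𝒞 ⊆ 𝒮 with |𝒞| ≤ k and ⋃𝒞 = U. -/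

import Mathlib

/-! Formalization of the Constrained Virtual Steiner Arborescence Problem (CVSAP),
its single-commodity flow IP formulation, and related notions. -/

/-- Vertices of the extended graph: original vertices plus super source `src`,
super sink `sinkS` for Steiner nodes and super sink `sinkR` for the root. -/
inductive ExtV (V : Type) where
  | orig : V → ExtV V
  | src : ExtV V
  | sinkS : ExtV V
  | sinkR : ExtV V
deriving DecidableEq

open ExtV

/-- A (finite) capacitated directed network. -/
structure Network (V : Type) [DecidableEq V] where
  E : Finset (V × V)
  uE : V × V → ℕ
  cE : V × V → ℝ

/-- A request `R = (root, S, T, u_r, c_S, u_S)`. -/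
structure Request (V : Type) [DecidableEq V] where
  root : V
  S : Finset V
  T : Finset V
  ur : ℕ
  cS : V → ℝ
  uS : V → ℕ

variable {V : Type} [DecidableEq V]

/-- Well-formedness: root is neither terminal nor Steiner site, Steiner sites and terminals
are disjoint, and all costs are positive. -/
def RequestWF (N : Network V) (R : Request V) : Prop :=
  R.root ∉ R.T ∧ R.root ∉ R.S ∧ Disjoint R.S R.T ∧
    (∀ s ∈ R.S, 0 < R.cS s) ∧ (∀ e ∈ N.E, 0 < N.cE e)

/-- Edge set of the extended graph `G_ext`. -/
def Eext (N : Network V) (R : Request V) : Finset (ExtV V × ExtV V) :=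
  (N.E.image fun e => (orig e.1, orig e.2)) ∪
    ({(orig R.root, sinkR)} : Finset (ExtV V × ExtV V)) ∪
    (R.S.image fun s => (orig s, sinkS)) ∪
    (R.S.image fun s => (src, orig s)) ∪
    (R.T.image fun t => (src, orig t))

/-- `E_R`: the extended edges without the edges into the Steiner super sink. -/
def ERext (N : Network V) (R : Request V) : Finset (ExtV V × ExtV V) :=
  (Eext N R).filter fun e => e.2 ≠ sinkS

/-- Edges of `F` leaving node `v`. -/
def outV (F : Finset (ExtV V × ExtV V)) (v : ExtV V) : Finset (ExtV V × ExtV V) :=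
  F.filter fun e => e.1 = v

/-- Edges of `F` entering node `v`. -/
def inV (F : Finset (ExtV V × ExtV V)) (v : ExtV V) : Finset (ExtV V × ExtV V) :=
  F.filter fun e => e.2 = v

/-- Edges of `F` leaving the node set `W`. -/
def outSet (F : Finset (ExtV V × ExtV V)) (W : Finset (ExtV V)) : Finset (ExtV V × ExtV V) :=
  F.filter fun e => e.1 ∈ W ∧ e.2 ∉ W

/-- Total flow of `f` on the edge set `F`. -/
def fSum (f : ExtV V × ExtV V → ℕ) (F : Finset (ExtV V × ExtV V)) : ℕ :=
  ∑ e ∈ F, f e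

/-- Embedding of a set of original nodes into the extended graph. -/
def extW (W : Finset V) : Finset (ExtV V) := W.image orig

/-- A walk in the support graph `G^f_ext`: consecutive nodes are joined by extended
edges carrying positive flow. -/
def IsSupportWalk (N : Network V) (R : Request V) (f : ExtV V × ExtV V → ℕ)
    (p : List (ExtV V)) : Prop :=
  p.Chain' fun a b => (a, b) ∈ Eext N R ∧ 1 ≤ f (a, b)

/-- (IP-1): flow conservation at all original nodes. -/
def IP1 (N : Network V) (R : Request V) (f : ExtV V × ExtV V → ℕ) : Prop :=
  ∀ v : V, fSum f (outV (Eext N R) (orig v)) = fSum f (inV (Eext N R) (orig v))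

/-- (IP-2): connectivity inequalities for activated Steiner sites. -/
def IP2 (N : Network V) (R : Request V) (x : V → ℕ) (f : ExtV V × ExtV V → ℕ) : Prop :=
  ∀ W : Finset V, ∀ s ∈ W, s ∈ R.S → x s ≤ fSum f (outSet (ERext N R) (extW W))

/-- (IP-3): directed Steiner cuts for terminals. -/
def IP3 (N : Network V) (R : Request V) (f : ExtV V × ExtV V → ℕ) : Prop :=
  ∀ W : Finset V, (W ∩ R.T).Nonempty → 1 ≤ fSum f (outSet (ERext N R) (extW W))

/-- Feasibility for the integer program IP-A-CVSAP. -/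
def IPFeasible (N : Network V) (R : Request V) (x : V → ℕ) (f : ExtV V × ExtV V → ℕ) : Prop :=
  (∀ s ∈ R.S, x s ≤ 1) ∧
  IP1 N R f ∧
  IP2 N R x f ∧
  IP3 N R f ∧
  (∀ s ∈ R.S, x s ≤ f (orig s, sinkS)) ∧
  (∀ s ∈ R.S, f (orig s, sinkS) ≤ R.uS s * x s) ∧
  f (orig R.root, sinkR) ≤ R.ur ∧
  (∀ e ∈ N.E, f (orig e.1, orig e.2) ≤ N.uE e) ∧
  (∀ t ∈ R.T, f (src, orig t) = 1) ∧
  (∀ s ∈ R.S, f (src, orig s) = x s)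

/-- Objective value of IP-A-CVSAP. -/
noncomputable def costIP (N : Network V) (R : Request V) (x : V → ℕ)
    (f : ExtV V × ExtV V → ℕ) : ℝ :=
  ∑ e ∈ N.E, N.cE e * f (orig e.1, orig e.2) + ∑ s ∈ R.S, R.cS s * x s

/-- A Virtual Arborescence: nodes, virtual edges and the mapping of virtual edges
onto paths in the underlying graph. -/
structure VirtArb (V : Type) where
  VT : Finset V
  ET : Finset (V × V)
  pi : V × V → List V

/-- `p` is a simple directed path in `N` from `u` to `v`. -/
def IsPathInG (N : Network V) (p : List V) (u v : V) : Prop :=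
  p.Chain' (fun a b => (a, b) ∈ N.E) ∧ p.head? = some u ∧ p.getLast? = some v ∧ p.Nodup

/-- The virtual edges whose path uses the edge `e` of the underlying graph. -/
def pathUses (TA : VirtArb V) (e : V × V) : Finset (V × V) :=
  TA.ET.filter fun d => e ∈ (TA.pi d).zip (TA.pi d).tail

/-- `|π(E_T)[e]|`: the number of paths of the virtual arborescence using edge `e`. -/
def pathCount (TA : VirtArb V) (e : V × V) : ℕ := (pathUses TA e).card

/-- Total degree of node `v` with respect to the virtual edge set `ET`. -/
def degTotal (ET : Finset (V × V)) (v : V) : ℕ :=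
  (ET.filter fun e => e.1 = v).card + (ET.filter fun e => e.2 = v).card

/-- `(VT, ET, r)` is an arborescence rooted at `r` with all edges oriented towards `r`. -/
def ArborTowards (VT : Finset V) (ET : Finset (V × V)) (r : V) : Prop :=
  (∀ e ∈ ET, e.1 ∈ VT ∧ e.2 ∈ VT ∧ e.1 ≠ e.2) ∧
  (∀ v ∈ VT, v ≠ r → (ET.filter fun e => e.1 = v).card = 1) ∧
  (∀ e ∈ ET, e.1 ≠ r) ∧
  (∀ v ∈ VT, ∃ p : List V, p.Chain' (fun a b => (a, b) ∈ ET) ∧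
      p.head? = some v ∧ p.getLast? = some r)

/-- `(VT, ET, r)` is an arborescence rooted at `r` with all edges oriented away from `r`. -/
def ArborAway (VT : Finset V) (ET : Finset (V × V)) (r : V) : Prop :=
  (∀ e ∈ ET, e.1 ∈ VT ∧ e.2 ∈ VT ∧ e.1 ≠ e.2) ∧
  (∀ v ∈ VT, v ≠ r → (ET.filter fun e => e.2 = v).card = 1) ∧
  (∀ e ∈ ET, e.2 ≠ r) ∧
  (∀ v ∈ VT, ∃ p : List V, p.Chain' (fun a b => (a, b) ∈ ET) ∧
      p.head? = some r ∧ p.getLast? = some v)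

/-- Feasible solutions of A-CVSAP: all arborescence edges oriented towards the root. -/
def FeasibleACVSAP (N : Network V) (R : Request V) (TA : VirtArb V) : Prop :=
  R.root ∈ TA.VT ∧
  ArborTowards TA.VT TA.ET R.root ∧
  (∀ d ∈ TA.ET, IsPathInG N (TA.pi d) d.1 d.2) ∧
  R.T ⊆ TA.VT ∧
  TA.VT ⊆ insert R.root (R.S ∪ R.T) ∧
  (∀ t ∈ R.T, degTotal TA.ET t = 1) ∧
  degTotal TA.ET R.root ≤ R.ur ∧
  (∀ s ∈ R.S, s ∈ TA.VT → degTotal TA.ET s ≤ R.uS s + 1) ∧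
  (∀ e ∈ N.E, pathCount TA e ≤ N.uE e)

/-- Feasible solutions of M-CVSAP: all arborescence edges oriented away from the root. -/
def FeasibleMCVSAP (N : Network V) (R : Request V) (TA : VirtArb V) : Prop :=
  R.root ∈ TA.VT ∧
  ArborAway TA.VT TA.ET R.root ∧
  (∀ d ∈ TA.ET, IsPathInG N (TA.pi d) d.1 d.2) ∧
  R.T ⊆ TA.VT ∧
  TA.VT ⊆ insert R.root (R.S ∪ R.T) ∧
  (∀ t ∈ R.T, degTotal TA.ET t = 1) ∧
  degTotal TA.ET R.root ≤ R.ur ∧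
  (∀ s ∈ R.S, s ∈ TA.VT → degTotal TA.ET s ≤ R.uS s + 1) ∧
  (∀ e ∈ N.E, pathCount TA e ≤ N.uE e)

/-- Cost of a virtual arborescence. -/
noncomputable def costCVSAP (N : Network V) (R : Request V) (TA : VirtArb V) : ℝ :=
  ∑ e ∈ N.E, N.cE e * pathCount TA e + ∑ s ∈ R.S.filter (· ∈ TA.VT), R.cS s

/-! ### Statement 0: set cover reduction -/

/-- Vertex type of the set-cover instance: terminals `t_u`, Steiner sites `s_A`,
and the root `none`. -/
abbrev SCV (U : Type) [DecidableEq U] := Option (U ⊕ Finset U)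

/-- The network of the reduction: an edge `(t_u, s_A)` for every `u ∈ A ∈ 𝒮` and an
edge `(s_A, root)` for every `A ∈ 𝒮`; all capacities `|U| + 1`, all costs `1`. -/
def scNetwork (U : Type) [Fintype U] [DecidableEq U] (𝒮 : Finset (Finset U)) :
    Network (SCV U) where
  E := (𝒮.biUnion fun A => A.image fun u => ((some (Sum.inl u) : SCV U), some (Sum.inr A))) ∪
    (𝒮.image fun A => ((some (Sum.inr A) : SCV U), none))
  uE := fun _ => Fintype.card U + 1
  cE := fun _ => 1

/-- The request of the reduction: root `none`, terminals `{t_u : u ∈ U}`, Steiner sites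
`{s_A : A ∈ 𝒮}`, root capacity `k`, Steiner capacities `|U|`. -/
def scRequest (U : Type) [Fintype U] [DecidableEq U] (𝒮 : Finset (Finset U)) (k : ℕ)
    (cS : SCV U → ℝ) : Request (SCV U) where
  root := none
  S := 𝒮.image fun A => (some (Sum.inr A) : SCV U)
  T := Finset.univ.image fun u : U => (some (Sum.inl u) : SCV U)
  ur := k
  cS := cS
  uS := fun _ => Fintype.card U

section Helpers
variable {U : Type} [Fintype U] [DecidableEq U]

lemma mem_scE {𝒮 : Finset (Finset U)} {a b : SCV U} :
    (a, b) ∈ (scNetwork U 𝒮).E ↔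
      (∃ A ∈ 𝒮, ∃ u ∈ A, a = some (Sum.inl u) ∧ b = some (Sum.inr A)) ∨
      (∃ A ∈ 𝒮, a = some (Sum.inr A) ∧ b = none) := by
  simp [scNetwork, Prod.ext_iff]
  constructor
  · rintro (⟨A,hA,u,hu,h1,h2⟩|⟨A,hA,h1,h2⟩)
    · exact Or.inl ⟨A,hA,u,hu,h1.symm,h2.symm⟩
    · exact Or.inr ⟨A,hA,h1.symm,h2.symm⟩
  · rintro (⟨A,hA,u,hu,h1,h2⟩|⟨A,hA,h1,h2⟩)
    · exact Or.inl ⟨A,hA,u,hu,h1.symm,h2.symm⟩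
    · exact Or.inr ⟨A,hA,h1.symm,h2.symm⟩
end Helpers

section Helpers
variable {U : Type} [Fintype U] [DecidableEq U]

lemma scNoEdgeFromRoot {𝒮 : Finset (Finset U)} {y : SCV U}
    (h : ((none : SCV U), y) ∈ (scNetwork U 𝒮).E) : False := by
  rcases mem_scE.mp h with ⟨A,_,u,_,h1,_⟩ | ⟨A,_,h1,_⟩ <;> simp at h1

lemma scEdgeFromSteiner {𝒮 : Finset (Finset U)} {A : Finset U} {y : SCV U}
    (h : ((some (Sum.inr A) : SCV U), y) ∈ (scNetwork U 𝒮).E) : A ∈ 𝒮 ∧ y = none := by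
  rcases mem_scE.mp h with ⟨B,_,u,_,h1,_⟩ | ⟨B,hB,h1,h2⟩
  · simp at h1
  · simp at h1; subst h1; exact ⟨hB, h2⟩

lemma scEdgeFromTerm {𝒮 : Finset (Finset U)} {u : U} {y : SCV U}
    (h : ((some (Sum.inl u) : SCV U), y) ∈ (scNetwork U 𝒮).E) :
    ∃ A ∈ 𝒮, u ∈ A ∧ y = some (Sum.inr A) := by
  rcases mem_scE.mp h with ⟨B,hB,w,hw,h1,h2⟩ | ⟨B,_,h1,_⟩
  · simp at h1; subst h1; exact ⟨B, hB, hw, h2⟩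
  · simp at h1

lemma scPath_steiner {𝒮 : Finset (Finset U)} {A : Finset U} {p : List (SCV U)} {v : SCV U}
    (h : IsPathInG (scNetwork U 𝒮) p (some (Sum.inr A)) v)
    (hne : (some (Sum.inr A) : SCV U) ≠ v) :
    A ∈ 𝒮 ∧ v = none ∧ p = [some (Sum.inr A), none] := by
  obtain ⟨hc, hh, hl, hn⟩ := h
  match p with
  | [] => simp at hh
  | [x] => simp at hh hl; subst hh; exact absurd hl hne
  | x :: y :: rest =>
    simp at hh; subst hh
    obtain ⟨hc1, hc2⟩ := List.isChain_cons.mp hc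
    have h1 := scEdgeFromSteiner (hc1 y rfl)
    obtain ⟨hA, hy⟩ := h1; subst hy
    match rest with
    | [] => simp at hl; exact ⟨hA, hl.symm, rfl⟩
    | z :: rest2 =>
      exact absurd ((List.isChain_cons_cons.mp hc2).1) (fun hz => scNoEdgeFromRoot hz)

lemma scPath_term {𝒮 : Finset (Finset U)} {u : U} {p : List (SCV U)} {v : SCV U}
    (h : IsPathInG (scNetwork U 𝒮) p (some (Sum.inl u)) v)
    (hne : (some (Sum.inl u) : SCV U) ≠ v) :
    ∃ A ∈ 𝒮, u ∈ A ∧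
      ((v = some (Sum.inr A) ∧ p = [some (Sum.inl u), some (Sum.inr A)]) ∨
       (v = none ∧ p = [some (Sum.inl u), some (Sum.inr A), none])) := by
  obtain ⟨hc, hh, hl, hn⟩ := h
  match p with
  | [] => simp at hh
  | [x] => simp at hh hl; subst hh; exact absurd hl hne
  | x :: y :: rest =>
    simp at hh; subst hh
    obtain ⟨hc1, hc2⟩ := List.isChain_cons.mp hc
    obtain ⟨A, hA, huA, hy⟩ := scEdgeFromTerm (hc1 y rfl)
    subst hy
    refine ⟨A, hA, huA, ?_⟩
    match rest with
    | [] => simp at hl; exact Or.inl ⟨hl.symm, rfl⟩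
    | z :: rest2 =>
      obtain ⟨hc3, hc4⟩ := List.isChain_cons_cons.mp hc2
      have hz := (scEdgeFromSteiner hc3).2; subst hz
      match rest2 with
      | [] => simp at hl; exact Or.inr ⟨hl.symm, rfl⟩
      | w :: rest3 => exact absurd ((List.isChain_cons_cons.mp hc4).1) (fun hw => scNoEdgeFromRoot hw)

lemma zip_tail_unique {α : Type*} : ∀ {p : List α}, p.Nodup → ∀ {a a' b : α},
    (a, b) ∈ p.zip p.tail → (a', b) ∈ p.zip p.tail → a = a'
  | [], _, _, _, _, h, _ => by simp at h
  | [x], _, _, _, _, h, _ => by simp at h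
  | x :: y :: rest, hn, a, a', b, h, h' => by
    simp only [List.tail_cons, List.zip_cons_cons, List.mem_cons] at h h'
    rcases h with h | h <;> rcases h' with h' | h'
    · rw [(Prod.mk.injEq _ _ _ _ ▸ h : a = x ∧ b = y).1, (Prod.mk.injEq _ _ _ _ ▸ h' : a' = x ∧ b = y).1]
    · exfalso
      have hb : b = y := (Prod.mk.injEq _ _ _ _ ▸ h : a = x ∧ b = y).2
      have : b ∈ rest := (List.of_mem_zip h').2
      rw [hb] at this
      exact (List.nodup_cons.mp (List.nodup_cons.mp hn).2).1 this
    · exfalso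
      have hb : b = y := (Prod.mk.injEq _ _ _ _ ▸ h' : a' = x ∧ b = y).2
      have : b ∈ rest := (List.of_mem_zip h).2
      rw [hb] at this
      exact (List.nodup_cons.mp (List.nodup_cons.mp hn).2).1 this
    · exact zip_tail_unique (List.nodup_cons.mp hn).2 h h'
end Helpers

section Back
variable {U : Type} [Fintype U] [DecidableEq U]

lemma sc_backward (𝒮 : Finset (Finset U)) (k : ℕ) (cS : SCV U → ℝ)
    (𝒞 : Finset (Finset U)) (hsub : 𝒞 ⊆ 𝒮) (hcard : 𝒞.card ≤ k)
    (hcov : ∀ u : U, ∃ A ∈ 𝒞, u ∈ A) :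
    ∃ TA : VirtArb (SCV U), FeasibleACVSAP (scNetwork U 𝒮) (scRequest U 𝒮 k cS) TA := by
  choose g hg1 hg2 using hcov
  set ET : Finset (SCV U × SCV U) :=
    (Finset.univ.image fun u : U => ((some (Sum.inl u) : SCV U), some (Sum.inr (g u)))) ∪
      (𝒞.image fun A => ((some (Sum.inr A) : SCV U), none)) with hET
  set VT : Finset (SCV U) :=
    insert none ((Finset.univ.image fun u : U => (some (Sum.inl u) : SCV U)) ∪
      (𝒞.image fun A => (some (Sum.inr A) : SCV U))) with hVT
  have hmemET : ∀ e : SCV U × SCV U, e ∈ ET ↔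
      (∃ u : U, e = (some (Sum.inl u), some (Sum.inr (g u)))) ∨
      (∃ A ∈ 𝒞, e = (some (Sum.inr A), none)) := by
    intro e
    simp [hET, Prod.ext_iff]
    constructor
    · rintro (⟨u, h1, h2⟩ | ⟨A, hA, h1, h2⟩)
      · exact Or.inl ⟨u, h1.symm, h2.symm⟩
      · exact Or.inr ⟨A, hA, h1.symm, h2.symm⟩
    · rintro (⟨u, h1, h2⟩ | ⟨A, hA, h1, h2⟩)
      · exact Or.inl ⟨u, h1.symm, h2.symm⟩
      · exact Or.inr ⟨A, hA, h1.symm, h2.symm⟩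
  have hout_t : ∀ u : U, ET.filter (fun e => e.1 = some (Sum.inl u)) =
      {(some (Sum.inl u), some (Sum.inr (g u)))} := by
    intro u; ext e
    simp only [Finset.mem_filter, Finset.mem_singleton]
    constructor
    · rintro ⟨he, h1⟩
      rcases (hmemET e).mp he with ⟨w, rfl⟩ | ⟨A, hA, rfl⟩
      · simp at h1; subst h1; rfl
      · simp at h1
    · rintro rfl
      exact ⟨(hmemET _).mpr (Or.inl ⟨u, rfl⟩), rfl⟩
  have hout_s : ∀ A ∈ 𝒞, ET.filter (fun e => e.1 = some (Sum.inr A)) =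
      {((some (Sum.inr A) : SCV U), none)} := by
    intro A hA; ext e
    simp only [Finset.mem_filter, Finset.mem_singleton]
    constructor
    · rintro ⟨he, h1⟩
      rcases (hmemET e).mp he with ⟨w, rfl⟩ | ⟨B, hB, rfl⟩
      · simp at h1
      · simp at h1; subst h1; rfl
    · rintro rfl
      exact ⟨(hmemET _).mpr (Or.inr ⟨A, hA, rfl⟩), rfl⟩
  have hout_ssub : ∀ A : Finset U, ET.filter (fun e => e.1 = some (Sum.inr A)) ⊆
      {((some (Sum.inr A) : SCV U), none)} := by
    intro A e he
    simp only [Finset.mem_filter] at he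
    rcases (hmemET e).mp he.1 with ⟨w, rfl⟩ | ⟨B, hB, rfl⟩
    · simp at he
    · have := he.2; simp at this; subst this; simp
  have hin_root : ET.filter (fun e => e.2 = (none : SCV U)) =
      𝒞.image fun A => ((some (Sum.inr A) : SCV U), none) := by
    ext e
    simp only [Finset.mem_filter, Finset.mem_image]
    constructor
    · rintro ⟨he, h2⟩
      rcases (hmemET e).mp he with ⟨w, rfl⟩ | ⟨B, hB, rfl⟩
      · simp at h2
      · exact ⟨B, hB, rfl⟩
    · rintro ⟨A, hA, rfl⟩
      exact ⟨(hmemET _).mpr (Or.inr ⟨A, hA, rfl⟩), rfl⟩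
  have hin_t : ∀ u : U, ET.filter (fun e => e.2 = some (Sum.inl u)) = ∅ := by
    intro u
    refine Finset.eq_empty_of_forall_notMem (fun e he => ?_)
    simp only [Finset.mem_filter] at he
    rcases (hmemET e).mp he.1 with ⟨w, rfl⟩ | ⟨B, hB, rfl⟩ <;> simp at he
  have hin_s : ∀ A : Finset U, ET.filter (fun e => e.2 = some (Sum.inr A)) ⊆
      Finset.univ.image fun u : U => ((some (Sum.inl u) : SCV U), some (Sum.inr A)) := by
    intro A e he
    simp only [Finset.mem_filter] at he
    rcases (hmemET e).mp he.1 with ⟨w, rfl⟩ | ⟨B, hB, rfl⟩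
    · have := he.2; simp at this; subst this; simp
    · simp at he
  refine ⟨⟨VT, ET, fun d => [d.1, d.2]⟩, ?_, ?_, ?_, ?_, ?_, ?_, ?_, ?_, ?_⟩
  · simp [hVT, scRequest]
  · refine ⟨?_, ?_, ?_, ?_⟩
    · intro e he
      rcases (hmemET e).mp he with ⟨u, rfl⟩ | ⟨A, hA, rfl⟩
      · refine ⟨by simp [hVT], ?_, by simp⟩
        simp only [hVT, Finset.mem_insert, Finset.mem_union, Finset.mem_image]
        exact Or.inr (Or.inr ⟨g u, hg1 u, rfl⟩)
      · refine ⟨?_, by simp [hVT], by simp⟩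
        simp only [hVT, Finset.mem_insert, Finset.mem_union, Finset.mem_image]
        exact Or.inr (Or.inr ⟨A, hA, rfl⟩)
    · intro v hv hvne
      simp only [hVT, Finset.mem_insert, Finset.mem_union, Finset.mem_image,
        Finset.mem_univ, true_and] at hv
      rcases hv with rfl | ⟨u, rfl⟩ | ⟨A, hA, rfl⟩
      · simp [scRequest] at hvne
      · rw [hout_t u]; simp
      · rw [hout_s A hA]; simp
    · intro e he
      rcases (hmemET e).mp he with ⟨u, rfl⟩ | ⟨A, hA, rfl⟩ <;> simp [scRequest]
    · intro v hv
      simp only [hVT, Finset.mem_insert, Finset.mem_union, Finset.mem_image,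
        Finset.mem_univ, true_and] at hv
      rcases hv with rfl | ⟨u, rfl⟩ | ⟨A, hA, rfl⟩
      · exact ⟨[none], by simp [scRequest, List.Chain']⟩
      · refine ⟨[some (Sum.inl u), some (Sum.inr (g u)), none], ?_, by simp, by simp [scRequest]⟩
        refine List.isChain_cons_cons.mpr ⟨(hmemET _).mpr (Or.inl ⟨u, rfl⟩), ?_⟩
        refine List.isChain_cons_cons.mpr ⟨(hmemET _).mpr (Or.inr ⟨g u, hg1 u, rfl⟩), ?_⟩
        simp
      · refine ⟨[some (Sum.inr A), none], ?_, by simp, by simp [scRequest]⟩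
        refine List.isChain_cons_cons.mpr ⟨(hmemET _).mpr (Or.inr ⟨A, hA, rfl⟩), by simp⟩
  · intro d hd
    rcases (hmemET d).mp hd with ⟨u, rfl⟩ | ⟨A, hA, rfl⟩
    · refine ⟨?_, by simp, by simp, by simp⟩
      refine List.isChain_cons_cons.mpr ⟨mem_scE.mpr (Or.inl ⟨g u, hsub (hg1 u), u, hg2 u, rfl, rfl⟩), by simp⟩
    · refine ⟨?_, by simp, by simp, by simp⟩
      refine List.isChain_cons_cons.mpr ⟨mem_scE.mpr (Or.inr ⟨A, hsub hA, rfl, rfl⟩), by simp⟩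
  · intro t ht
    simp only [scRequest, Finset.mem_image, Finset.mem_univ, true_and] at ht
    obtain ⟨u, rfl⟩ := ht
    simp [hVT]
  · intro v hv
    simp only [hVT, Finset.mem_insert, Finset.mem_union, Finset.mem_image,
      Finset.mem_univ, true_and] at hv
    rcases hv with rfl | ⟨u, rfl⟩ | ⟨A, hA, rfl⟩
    · simp [scRequest]
    · simp only [scRequest, Finset.mem_insert, Finset.mem_union]
      exact Or.inr (Or.inr (by simp))
    · simp only [scRequest, Finset.mem_insert, Finset.mem_union]
      exact Or.inr (Or.inl (Finset.mem_image.mpr ⟨A, hsub hA, rfl⟩))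
  · intro t ht
    simp only [scRequest, Finset.mem_image, Finset.mem_univ, true_and] at ht
    obtain ⟨u, rfl⟩ := ht
    unfold degTotal
    rw [hout_t u, hin_t u]
    simp
  · show degTotal ET (scRequest U 𝒮 k cS).root ≤ (scRequest U 𝒮 k cS).ur
    have hroot : (scRequest U 𝒮 k cS).root = (none : SCV U) := rfl
    unfold degTotal
    rw [hroot]
    have h1 : ET.filter (fun e => e.1 = (none : SCV U)) = ∅ := by
      refine Finset.eq_empty_of_forall_notMem (fun e he => ?_)
      simp only [Finset.mem_filter] at he
      rcases (hmemET e).mp he.1 with ⟨w, rfl⟩ | ⟨B, hB, rfl⟩ <;> simp at he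
    rw [h1, hin_root]
    simp only [Finset.card_empty, zero_add]
    calc (𝒞.image fun A => ((some (Sum.inr A) : SCV U), none)).card ≤ 𝒞.card :=
          Finset.card_image_le
      _ ≤ k := hcard
  · intro s hs _
    simp only [scRequest, Finset.mem_image] at hs
    obtain ⟨A, hA, rfl⟩ := hs
    unfold degTotal
    have h1 : (ET.filter (fun e => e.1 = some (Sum.inr A))).card ≤ 1 :=
      (Finset.card_le_card (hout_ssub A)).trans (by simp)
    have h2 : (ET.filter (fun e => e.2 = some (Sum.inr A))).card ≤ Fintype.card U :=
      (Finset.card_le_card (hin_s A)).trans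
        ((Finset.card_image_le).trans (by simp))
    calc _ ≤ 1 + Fintype.card U := Nat.add_le_add h1 h2
      _ = (scRequest U 𝒮 k cS).uS (some (Sum.inr A)) + 1 := by
          simp [scRequest, Nat.add_comm]
  · intro e _
    show pathCount _ e ≤ Fintype.card U + 1
    refine le_trans (Finset.card_le_card (t := {e}) ?_) (by simp)
    intro d hd
    simp only [pathUses, Finset.mem_filter, List.tail_cons, List.zip_cons_cons,
      List.zip_nil_right, List.mem_singleton] at hd
    simp [hd.2]
end Back

section Fwd
variable {U : Type} [Fintype U] [DecidableEq U]

lemma sc_forward (𝒮 : Finset (Finset U)) (k : ℕ) (cS : SCV U → ℝ)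
    (TA : VirtArb (SCV U)) (hfeas : FeasibleACVSAP (scNetwork U 𝒮) (scRequest U 𝒮 k cS) TA) :
    ∃ 𝒞 ⊆ 𝒮, 𝒞.card ≤ k ∧ ∀ u : U, ∃ A ∈ 𝒞, u ∈ A := by
  classical
  obtain ⟨hroot, ⟨harb1, harb2, harb3, harb4⟩, hpaths, hT, hVT, hdegT, hdegR, hdegS, hcap⟩ := hfeas
  set rootE := TA.ET.filter (fun e => e.2 = (none : SCV U)) with hrootE
  letI : ∀ (e : SCV U × SCV U) (A : Finset U), Decidable
      (((some (Sum.inr A) : SCV U), (none : SCV U)) ∈ (TA.pi e).zip (TA.pi e).tail) :=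
    fun _ _ => Classical.propDecidable _
  letI : DecidablePred (fun A : Finset U => ∃ e ∈ rootE,
    ((some (Sum.inr A) : SCV U), (none : SCV U)) ∈ (TA.pi e).zip (TA.pi e).tail) :=
    fun _ => Classical.propDecidable _
  set 𝒞 := 𝒮.filter (fun A => ∃ e ∈ rootE,
    ((some (Sum.inr A) : SCV U), (none : SCV U)) ∈ (TA.pi e).zip (TA.pi e).tail) with h𝒞
  refine ⟨𝒞, Finset.filter_subset _ _, ?_, ?_⟩
  · -- cardinality bound
    have hsub : 𝒞 ⊆ rootE.biUnion (fun e => 𝒮.filter (fun A =>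
        ((some (Sum.inr A) : SCV U), (none : SCV U)) ∈ (TA.pi e).zip (TA.pi e).tail)) := by
      intro A hA
      simp only [h𝒞, Finset.mem_filter] at hA
      obtain ⟨hA𝒮, e, he, hmem⟩ := hA
      exact Finset.mem_biUnion.mpr ⟨e, he, Finset.mem_filter.mpr ⟨hA𝒮, hmem⟩⟩
    have hone : ∀ e ∈ rootE, (𝒮.filter (fun A =>
        ((some (Sum.inr A) : SCV U), (none : SCV U)) ∈ (TA.pi e).zip (TA.pi e).tail)).card ≤ 1 := by
      intro e he
      refine Finset.card_le_one.mpr (fun A hA B hB => ?_)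
      simp only [Finset.mem_filter] at hA hB
      have hnd : (TA.pi e).Nodup := (hpaths e (Finset.mem_filter.mp he).1).2.2.2
      have := zip_tail_unique hnd hA.2 hB.2
      simpa using this
    calc 𝒞.card ≤ _ := Finset.card_le_card hsub
      _ ≤ ∑ e ∈ rootE, (𝒮.filter (fun A =>
          ((some (Sum.inr A) : SCV U), (none : SCV U)) ∈ (TA.pi e).zip (TA.pi e).tail)).card :=
        Finset.card_biUnion_le
      _ ≤ ∑ _e ∈ rootE, 1 := Finset.sum_le_sum hone
      _ = rootE.card := by simp
      _ ≤ degTotal TA.ET (none : SCV U) := Nat.le_add_left _ _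
      _ ≤ k := hdegR
  · -- cover
    intro u
    have htu : (some (Sum.inl u) : SCV U) ∈ TA.VT := hT (by simp [scRequest])
    have hne : (some (Sum.inl u) : SCV U) ≠ (scRequest U 𝒮 k cS).root := by simp [scRequest]
    obtain ⟨e, hecard⟩ := Finset.card_eq_one.mp (harb2 _ htu hne)
    have heET : e ∈ TA.ET ∧ e.1 = some (Sum.inl u) := by
      have : e ∈ TA.ET.filter (fun e => e.1 = some (Sum.inl u)) := by simp [hecard]
      simpa using this
    obtain ⟨heET, he1⟩ := heET
    have hpath := hpaths e heET
    rw [he1] at hpath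
    have hne2 : (some (Sum.inl u) : SCV U) ≠ e.2 := he1 ▸ (harb1 e heET).2.2
    obtain ⟨A, hA𝒮, huA, hcase⟩ := scPath_term hpath hne2
    rcases hcase with ⟨he2, hpi⟩ | ⟨he2, hpi⟩
    · -- e.2 = sV A : find the out-edge of sV A
      have hsVT : (some (Sum.inr A) : SCV U) ∈ TA.VT := he2 ▸ (harb1 e heET).2.1
      have hsne : (some (Sum.inr A) : SCV U) ≠ (scRequest U 𝒮 k cS).root := by simp [scRequest]
      obtain ⟨e', he'card⟩ := Finset.card_eq_one.mp (harb2 _ hsVT hsne)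
      have he' : e' ∈ TA.ET ∧ e'.1 = some (Sum.inr A) := by
        have : e' ∈ TA.ET.filter (fun e => e.1 = some (Sum.inr A)) := by simp [he'card]
        simpa using this
      obtain ⟨he'ET, he'1⟩ := he'
      have hpath' := hpaths e' he'ET
      rw [he'1] at hpath'
      have hne3 : (some (Sum.inr A) : SCV U) ≠ e'.2 := he'1 ▸ (harb1 e' he'ET).2.2
      obtain ⟨_, he'2, hpi'⟩ := scPath_steiner hpath' hne3
      refine ⟨A, ?_, huA⟩
      simp only [h𝒞, Finset.mem_filter]
      refine ⟨hA𝒮, e', Finset.mem_filter.mpr ⟨he'ET, he'2⟩, ?_⟩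
      rw [hpi']; simp
    · -- e.2 = none : e itself is a root edge whose path uses (sV A, none)
      refine ⟨A, ?_, huA⟩
      simp only [h𝒞, Finset.mem_filter]
      refine ⟨hA𝒮, e, Finset.mem_filter.mpr ⟨heET, he2⟩, ?_⟩
      rw [hpi]; simp
end Fwd

/-- The constructed A-CVSAP instance admits a feasible Virtual Arborescence iff there is a
set cover of size at most `k`. -/
theorem setCover_reduction {U : Type} [Fintype U] [DecidableEq U] [Nonempty U]
    (𝒮 : Finset (Finset U)) (hcover : ∀ u : U, ∃ A ∈ 𝒮, u ∈ A) (k : ℕ)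
    (cS : SCV U → ℝ) (hcS : ∀ v : SCV U, 0 < cS v) :
    (∃ TA : VirtArb (SCV U), FeasibleACVSAP (scNetwork U 𝒮) (scRequest U 𝒮 k cS) TA) ↔
      (∃ 𝒞 ⊆ 𝒮, 𝒞.card ≤ k ∧ ∀ u : U, ∃ A ∈ 𝒞, u ∈ A) := by
  constructor
  · rintro ⟨TA, hTA⟩
    exact sc_forward 𝒮 k cS TA hTA
  · rintro ⟨𝒞, hsub, hcard, hcov⟩
    exact sc_backward 𝒮 k cS 𝒞 hsub hcard hcov
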